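/- Let F : B(H_A) → B(H_C) and G : B(H_B) → B(H_C) be registers of the form F(a) = W(a ⊗ 1_{H_B})W* and G(b) = W(1_{H_A} ⊗ b)W* for a unitary W : H_A ⊗ H_B → H_C (finite-dimensional spaces). Then the range of G equals the commutant of the range of F, i.e., G(B(H_B)) = { x ∈ B(H_C) : ∀ a, x·F(a) = F(a)·x }. -/

import Mathlib

open Kronecker Matrix

lemma key_entry {n m : ℕ} (y : Matrix (Fin n × Fin m) (Fin n × Fin m) ℂ)
    (hy : ∀ a : Matrix (Fin n) (Fin n) ℂ,
      y * (a ⊗ₖ (1 : Matrix (Fin m) (Fin m) ℂ)) = (a ⊗ₖ 1) * y)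
    (i j p r : Fin n) (q s : Fin m) :
    (if j = r then y (p,q) (i,s) else 0) = (if i = p then y (j,q) (r,s) else 0) := by
  have h := congrFun (congrFun (hy (single i j 1)) (p,q)) (r,s)
  simpa [Matrix.mul_apply, Matrix.kroneckerMap_apply, Matrix.one_apply,
    Matrix.single, Fintype.sum_prod_type, mul_ite, ite_mul, mul_comm,
    ite_and, Finset.sum_ite_eq, Finset.sum_ite_eq'] using h

/-- For complementary registers `F a = W (a ⊗ 1) W*` and `G b = W (1 ⊗ b) W*`
(with `W` unitary), the range of `G` is the commutant of the range of `F`. -/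
theorem range_complement_eq_commutant {n m k : ℕ}
    (hn : 0 < n) (hm : 0 < m) (hk : 0 < k)
    (W : Matrix (Fin k) (Fin n × Fin m) ℂ)
    (hW : Wᴴ * W = 1 ∧ W * Wᴴ = 1)
    (F : Matrix (Fin n) (Fin n) ℂ → Matrix (Fin k) (Fin k) ℂ)
    (G : Matrix (Fin m) (Fin m) ℂ → Matrix (Fin k) (Fin k) ℂ)
    (hF : ∀ a, F a = W * (a ⊗ₖ (1 : Matrix (Fin m) (Fin m) ℂ)) * Wᴴ)
    (hG : ∀ b, G b = W * ((1 : Matrix (Fin n) (Fin n) ℂ) ⊗ₖ b) * Wᴴ) :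
    Set.range G = { x : Matrix (Fin k) (Fin k) ℂ | ∀ a, x * F a = F a * x } := by
  obtain ⟨hW1, hW2⟩ := hW
  ext x
  constructor
  · rintro ⟨b, rfl⟩ a
    rw [hG, hF]
    have h1 : ((1 : Matrix (Fin n) (Fin n) ℂ) ⊗ₖ b) * (a ⊗ₖ (1 : Matrix (Fin m) (Fin m) ℂ))
        = (a ⊗ₖ (1 : Matrix (Fin m) (Fin m) ℂ)) * ((1 : Matrix (Fin n) (Fin n) ℂ) ⊗ₖ b) := by
      rw [← Matrix.mul_kronecker_mul, ← Matrix.mul_kronecker_mul, one_mul, mul_one,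
        one_mul, mul_one]
    calc W * ((1 : Matrix (Fin n) (Fin n) ℂ) ⊗ₖ b) * Wᴴ * (W * (a ⊗ₖ (1 : Matrix (Fin m) (Fin m) ℂ)) * Wᴴ)
        = W * ((1 ⊗ₖ b) * (Wᴴ * W) * (a ⊗ₖ 1)) * Wᴴ := by
          simp only [Matrix.mul_assoc]
      _ = W * ((a ⊗ₖ 1) * (Wᴴ * W) * (1 ⊗ₖ b)) * Wᴴ := by
          rw [hW1, Matrix.mul_one, Matrix.mul_one, h1]
      _ = W * (a ⊗ₖ (1 : Matrix (Fin m) (Fin m) ℂ)) * Wᴴ * (W * ((1 : Matrix (Fin n) (Fin n) ℂ) ⊗ₖ b) * Wᴴ) := by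
          simp only [Matrix.mul_assoc]
  · intro hx
    set y : Matrix (Fin n × Fin m) (Fin n × Fin m) ℂ := Wᴴ * x * W with hy_def
    have hy : ∀ a : Matrix (Fin n) (Fin n) ℂ,
        y * (a ⊗ₖ (1 : Matrix (Fin m) (Fin m) ℂ)) = (a ⊗ₖ 1) * y := by
      intro a
      have h := hx a
      rw [hF] at h
      have h2 := congrArg (fun z => Wᴴ * z * W) h
      simp only [← Matrix.mul_assoc] at h2
      rw [Matrix.mul_assoc _ Wᴴ W, hW1, Matrix.mul_one, Matrix.one_mul] at h2
      rw [hy_def]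
      simp only [← Matrix.mul_assoc]
      exact h2
    set z : Fin n := ⟨0, hn⟩
    refine ⟨Matrix.of fun q s => y (z, q) (z, s), ?_⟩
    have hyb : y = (1 : Matrix (Fin n) (Fin n) ℂ) ⊗ₖ Matrix.of fun q s => y (z, q) (z, s) := by
      ext ⟨p, q⟩ ⟨r, s⟩
      simp only [Matrix.kroneckerMap_apply, Matrix.one_apply, Matrix.of_apply]
      by_cases hpr : p = r
      · subst hpr
        have h := key_entry y hy p z p z q s
        simpa using h
      · have h := key_entry y hy r r p r q s
        simp [hpr, Ne.symm hpr] at h ⊢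
        exact h
    rw [hG, ← hyb, hy_def]
    simp only [← Matrix.mul_assoc]
    rw [Matrix.mul_assoc _ W Wᴴ, hW2, Matrix.mul_one, Matrix.one_mul]
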